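/- For a budget T, number of arms K, rounds R, positive decreasing reals z_1 > z_2 > ... > z_R, positive integers b_1,...,b_R with sum b_1+...+b_R = K-1, define C = 1/z_R + Σ_{r=1}^R b_r/z_r and n_r = ⌈(T-K)/(C·z_r)⌉. Then the total sample count satisfies n_R + Σ_{r=1}^R b_r·n_r ≤ T. -/

import Mathlib

open Finset

/-- The general sequential elimination algorithm respects the budget constraint:
with `n_r = ⌈(T-K)/(C z_r)⌉` and `C = 1/z_R + Σ_r b_r/z_r`, where `Σ_r b_r = K-1`,
we have `n_R + Σ_r b_r n_r ≤ T`. -/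
theorem stmt0 (T K R : ℕ) (hR : 0 < R) (hTK : K ≤ T)
    (z : Fin R → ℝ) (hz : ∀ r, 0 < z r)
    (hzdec : ∀ r s : Fin R, r < s → z s < z r)
    (b : Fin R → ℕ) (hb : ∀ r, 0 < b r)
    (hbsum : ∑ r, b r = K - 1)
    (C : ℝ) (hC : C = 1 / z ⟨R - 1, by omega⟩ + ∑ r, (b r : ℝ) / z r)
    (n : Fin R → ℕ) (hn : ∀ r, n r = ⌈((T : ℝ) - K) / (C * z r)⌉₊) :
    n ⟨R - 1, by omega⟩ + ∑ r, b r * n r ≤ T := by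
  have hrlt : R - 1 < R := by omega
  set rR : Fin R := ⟨R - 1, hrlt⟩ with hrR
  have hzR : 0 < z rR := hz rR
  have hCpos : 0 < C := by
    rw [hC]
    have h1 : 0 < 1 / z rR := one_div_pos.mpr hzR
    have h2 : 0 ≤ ∑ r, (b r : ℝ) / z r :=
      Finset.sum_nonneg fun r _ => div_nonneg (Nat.cast_nonneg _) (hz r).le
    exact add_pos_of_pos_of_nonneg h1 h2
  have hK2 : 2 ≤ K := by
    have h1 : R ≤ ∑ r, b r := by
      calc R = ∑ _r : Fin R, 1 := by simp
        _ ≤ ∑ r, b r := Finset.sum_le_sum fun r _ => hb r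
    omega
  set X : ℝ := (T : ℝ) - K with hXdef
  have hX : (0:ℝ) ≤ X := sub_nonneg.mpr (by exact_mod_cast hTK)
  have hbound : ∀ r, (n r : ℝ) ≤ X / C * (1 / z r) + 1 := by
    intro r
    have hzr := hz r
    have hpos : 0 ≤ X / (C * z r) := by positivity
    have heq : X / (C * z r) = X / C * (1 / z r) := by
      field_simp
    rw [hn r]
    refine le_of_lt ?_
    calc (⌈X / (C * z r)⌉₊ : ℝ) < X / (C * z r) + 1 := Nat.ceil_lt_add_one hpos
      _ = X / C * (1 / z r) + 1 := by rw [heq]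
  have hbsumR : (∑ r, (b r : ℝ)) = (K : ℝ) - 1 := by
    have h : ((∑ r, b r : ℕ) : ℝ) = ((K - 1 : ℕ) : ℝ) := by exact_mod_cast hbsum
    rw [Nat.cast_sum, Nat.cast_sub (by omega : 1 ≤ K)] at h
    simpa using h
  have hsum : (∑ r, (b r : ℝ) * n r) ≤ X / C * (∑ r, (b r : ℝ) / z r) + ((K : ℝ) - 1) := by
    calc ∑ r, (b r : ℝ) * n r ≤ ∑ r, (b r : ℝ) * (X / C * (1 / z r) + 1) :=
        Finset.sum_le_sum fun r _ =>
          mul_le_mul_of_nonneg_left (hbound r) (by positivity)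
      _ = X / C * (∑ r, (b r : ℝ) / z r) + ∑ r, (b r : ℝ) := by
          rw [Finset.mul_sum, ← Finset.sum_add_distrib]
          refine Finset.sum_congr rfl fun r _ => ?_
          field_simp
      _ = _ := by rw [hbsumR]
  have hCC : X / C * (1 / z rR) + X / C * (∑ r, (b r : ℝ) / z r) = X := by
    rw [← mul_add, ← hC, div_mul_cancel₀ X (ne_of_gt hCpos)]
  have hfinal : ((n rR : ℝ) + ∑ r, (b r : ℝ) * n r) ≤ (T : ℝ) := by
    have h1 := hbound rR
    have hXK : X + (K : ℝ) = T := by rw [hXdef]; ring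
    linarith
  have hcast : ((n rR + ∑ r, b r * n r : ℕ) : ℝ) ≤ (T : ℝ) := by
    push_cast
    linarith
  exact_mod_cast hcast
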